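/- Let a > 1 be real. For every y ∈ (−1, 1), the function y' ↦ F(1, y', a) − F(1, y', a⁻¹) has derivative (a² − 1)/(√(1 − y²)·(a² + 1 − 2·a·y)) at the point y' = y; in particular this function is strictly increasing on (−1, 1). -/

import Mathlib

/-- `F(x, y, t) = arccos((x·y − t)/√(t² + x² − 2·t·x·y))`. -/
noncomputable def F (x y t : ℝ) : ℝ :=
  Real.arccos ((x * y - t) / Real.sqrt (t ^ 2 + x ^ 2 - 2 * t * x * y))

lemma auxF (t : ℝ) (ht : 0 < t) (y : ℝ) (hy : y ∈ Set.Ioo (-1 : ℝ) 1) :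
    HasDerivAt (fun y' : ℝ => F 1 y' t)
      (-((1 - t * y) / ((t ^ 2 + 1 - 2 * t * y) * Real.sqrt (1 - y ^ 2)))) y := by
  obtain ⟨hy1, hy2⟩ := hy
  set D : ℝ := t ^ 2 + 1 - 2 * t * y with hDdef
  have hD : 0 < D := by nlinarith [sq_nonneg (t - 1)]
  have hsD : 0 < Real.sqrt D := Real.sqrt_pos.2 hD
  have h1y : 0 < 1 - y ^ 2 := by nlinarith
  have hs1 : 0 < Real.sqrt (1 - y ^ 2) := Real.sqrt_pos.2 h1y
  have hsub : (y - t) ^ 2 < D := by nlinarith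
  have habs : |y - t| < Real.sqrt D := by
    rw [← Real.sqrt_sq_eq_abs]
    exact Real.sqrt_lt_sqrt (sq_nonneg _) hsub
  have hlt : (y - t) / Real.sqrt D < 1 := (div_lt_one hsD).2 ((abs_lt.1 habs).2)
  have hgt : -1 < (y - t) / Real.sqrt D := by
    rw [lt_div_iff₀ hsD]; nlinarith [(abs_lt.1 habs).1]
  have hD' : HasDerivAt (fun y' : ℝ => t ^ 2 + 1 - 2 * t * y') (-(2 * t)) y := by
    exact ((hasDerivAt_const y (t ^ 2 + 1)).sub ((hasDerivAt_id y).const_mul (2 * t))).congr_deriv (by ring)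
  have hsqrt : HasDerivAt (fun y' : ℝ => Real.sqrt (t ^ 2 + 1 - 2 * t * y'))
      (1 / (2 * Real.sqrt D) * -(2 * t)) y :=
    (Real.hasDerivAt_sqrt hD.ne').comp y hD'
  have hnum : HasDerivAt (fun y' : ℝ => y' - t) 1 y := (hasDerivAt_id y).sub_const t
  have hu : HasDerivAt (fun y' : ℝ => (y' - t) / Real.sqrt (t ^ 2 + 1 - 2 * t * y'))
      ((1 * Real.sqrt D - (y - t) * (1 / (2 * Real.sqrt D) * -(2 * t))) / (Real.sqrt D) ^ 2) y :=
    hnum.div hsqrt hsD.ne'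
  have harc := (Real.hasDerivAt_arccos (ne_of_gt hgt) (ne_of_lt hlt)).comp y hu
  have hFeq : (fun y' : ℝ => F 1 y' t)
      = fun y' : ℝ => Real.arccos ((y' - t) / Real.sqrt (t ^ 2 + 1 - 2 * t * y')) := by
    funext y'; simp [F]
  rw [hFeq]
  refine harc.congr_deriv ?_
  symm
  have hsq : Real.sqrt D ^ 2 = D := Real.sq_sqrt hD.le
  have h1u : 1 - ((y - t) / Real.sqrt D) ^ 2 = (1 - y ^ 2) / D := by
    rw [div_pow, hsq]; field_simp; ring
  rw [h1u, Real.sqrt_div h1y.le]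
  have hssD : Real.sqrt D * Real.sqrt D = D := Real.mul_self_sqrt hD.le
  field_simp
  linear_combination (t * (t - y)) * hsq

/-- Let `a > 1`.  For every `y ∈ (−1, 1)`, the function
`y' ↦ F(1, y', a) − F(1, y', a⁻¹)` has derivative
`(a² − 1)/(√(1 − y²)·(a² + 1 − 2·a·y))` at `y`; in particular it is strictly
increasing on `(−1, 1)`. -/
theorem stmt_12 (a : ℝ) (ha : 1 < a) :
    (∀ y ∈ Set.Ioo (-1 : ℝ) 1,
      HasDerivAt (fun y' : ℝ => F 1 y' a - F 1 y' a⁻¹)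
        ((a ^ 2 - 1) / (Real.sqrt (1 - y ^ 2) * (a ^ 2 + 1 - 2 * a * y))) y) ∧
    StrictMonoOn (fun y : ℝ => F 1 y a - F 1 y a⁻¹) (Set.Ioo (-1 : ℝ) 1) := by
  have ha0 : 0 < a := lt_trans one_pos ha
  have hder : ∀ y ∈ Set.Ioo (-1 : ℝ) 1,
      HasDerivAt (fun y' : ℝ => F 1 y' a - F 1 y' a⁻¹)
        ((a ^ 2 - 1) / (Real.sqrt (1 - y ^ 2) * (a ^ 2 + 1 - 2 * a * y))) y := by
    intro y hy
    obtain ⟨hy1, hy2⟩ := hy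
    have h1 := auxF a ha0 y ⟨hy1, hy2⟩
    have h2 := auxF a⁻¹ (inv_pos.2 ha0) y ⟨hy1, hy2⟩
    have h := h1.sub h2
    refine h.congr_deriv ?_
    symm
    have hD : 0 < a ^ 2 + 1 - 2 * a * y := by nlinarith [sq_nonneg (a - 1)]
    have hDi : 0 < (a⁻¹) ^ 2 + 1 - 2 * a⁻¹ * y := by
      have : 0 < a⁻¹ := inv_pos.2 ha0
      nlinarith [sq_nonneg (a⁻¹ - 1)]
    have h1y : 0 < 1 - y ^ 2 := by nlinarith
    have hs1 : 0 < Real.sqrt (1 - y ^ 2) := Real.sqrt_pos.2 h1y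
    have hDi_eq : (a⁻¹) ^ 2 + 1 - 2 * a⁻¹ * y = (a ^ 2 + 1 - 2 * a * y) / a ^ 2 := by
      field_simp; ring
    have hnum_eq : 1 - a⁻¹ * y = (a - y) / a := by field_simp
    rw [hDi_eq, hnum_eq]
    field_simp [hD.ne', hs1.ne', ha0.ne']
    ring
  refine ⟨hder, ?_⟩
  apply strictMonoOn_of_deriv_pos (convex_Ioo _ _)
  · intro y hy
    exact ((hder y hy).continuousAt.continuousWithinAt)
  · intro y hy
    rw [interior_Ioo] at hy
    rw [(hder y hy).deriv]
    obtain ⟨hy1, hy2⟩ := hy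
    have hD : 0 < a ^ 2 + 1 - 2 * a * y := by nlinarith [sq_nonneg (a - 1)]
    have hs1 : 0 < Real.sqrt (1 - y ^ 2) := Real.sqrt_pos.2 (by nlinarith)
    have hnum : 0 < a ^ 2 - 1 := by nlinarith
    positivity
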